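/- arXiv:2204.14067 — 3 statements merged into one kernel-verified Lean document; each statement's English description precedes it below -/
import Mathlib

section
/- If X has SVD X = Σ_{i=1}^k σ_i u_i v_i^T with σ_i > 0 and k = rank(X), then for any matrices W, H with W H^T = X and ‖X‖_* = (1/2)(‖W‖_F² + ‖H‖_F²), it holds that W^T U = H^T V, where U = [u_1,…,u_k] and V = [v_1,…,v_k]. -/
open Matrix

noncomputable def frobNorm {m n : ℕ} (X : Matrix (Fin m) (Fin n) ℝ) : ℝ :=
  Real.sqrt (∑ i, ∑ j, (X i j) ^ 2)

noncomputable def nuclearNorm {m n : ℕ} (X : Matrix (Fin m) (Fin n) ℝ) : ℝ :=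
  ∑ i, Real.sqrt ((show (Xᵀ * X).IsHermitian by
    simpa [Matrix.conjTranspose_eq_transpose_of_trivial] using
      Matrix.isHermitian_conjTranspose_mul_self X).eigenvalues i)

private lemma bessel_dot {m n : ℕ} (Q : Matrix (Fin m) (Fin n) ℝ) (hQ : Q * (Qᵀ * Q) = Q)
    (c : Fin m → ℝ) : (Qᵀ *ᵥ c) ⬝ᵥ (Qᵀ *ᵥ c) ≤ c ⬝ᵥ c := by
  set t := Qᵀ *ᵥ c with ht
  set u := Q *ᵥ t with hu
  have hQT : Qᵀ * Q * Qᵀ = Qᵀ := by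
    have := congrArg Matrix.transpose hQ
    simpa [Matrix.transpose_mul, Matrix.mul_assoc] using this
  have h1 : Qᵀ *ᵥ u = t := by
    rw [hu, ht, mulVec_mulVec, mulVec_mulVec, hQT]
  have hcu : c ⬝ᵥ u = t ⬝ᵥ t := by
    rw [hu, dotProduct_mulVec, ← mulVec_transpose, ht]
  have huu : u ⬝ᵥ u = t ⬝ᵥ t := by
    conv_lhs => rw [hu, dotProduct_mulVec, ← mulVec_transpose, h1]
  have hnn : (0:ℝ) ≤ (c - u) ⬝ᵥ (c - u) := by
    apply Finset.sum_nonneg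
    intro i _
    exact mul_self_nonneg _
  have hexp : (c - u) ⬝ᵥ (c - u) = c ⬝ᵥ c - t ⬝ᵥ t := by
    rw [sub_dotProduct, dotProduct_sub, dotProduct_sub, hcu, huu,
      dotProduct_comm u c, hcu]
    ring
  linarith [hexp ▸ hnn]

private lemma bessel_sum {m n : ℕ} (Q : Matrix (Fin m) (Fin n) ℝ) (hQ : Q * (Qᵀ * Q) = Q)
    (c : Fin m → ℝ) : ∑ j, (∑ i, Q i j * c i) ^ 2 ≤ ∑ i, (c i) ^ 2 := by
  have := bessel_dot Q hQ c
  simpa [dotProduct, mulVec, Matrix.transpose_apply, pow_two, mul_comm] using this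

private lemma trace_diagonal_mul' {k : ℕ} (σ : Fin k → ℝ) (M : Matrix (Fin k) (Fin k) ℝ) :
    Matrix.trace (Matrix.diagonal σ * M) = ∑ i, σ i * M i i := by
  simp [Matrix.trace, Matrix.diag, Matrix.diagonal_mul]

private lemma trace_eq_sum_mul {k l : ℕ} (A : Matrix (Fin k) (Fin l) ℝ)
    (B : Matrix (Fin l) (Fin k) ℝ) :
    Matrix.trace (A * B) = ∑ q, ∑ p, A q p * B p q := by
  simp [Matrix.trace, Matrix.diag, Matrix.mul_apply]

private lemma frob_sq {m n : ℕ} (A : Matrix (Fin m) (Fin n) ℝ) :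
    frobNorm A ^ 2 = ∑ i, ∑ j, (A i j) ^ 2 := by
  apply Real.sq_sqrt
  apply Finset.sum_nonneg
  intro i _
  apply Finset.sum_nonneg
  intro j _
  positivity

/-- If `X = U diag(σ) Vᵀ` is an SVD of `X` with positive singular values and
`k = rank X`, then any factorization `X = W Hᵀ` attaining the nuclear norm in the
variational characterization satisfies `Wᵀ U = Hᵀ V`. -/
theorem optimal_factorization_aligned {m n k l : ℕ}
    (X : Matrix (Fin m) (Fin n) ℝ)
    (U : Matrix (Fin m) (Fin k) ℝ) (V : Matrix (Fin n) (Fin k) ℝ) (σ : Fin k → ℝ)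
    (hU : Uᵀ * U = 1) (hV : Vᵀ * V = 1) (hσ : ∀ i, 0 < σ i)
    (hSVD : X = U * Matrix.diagonal σ * Vᵀ)
    (hrank : X.rank = k)
    (W : Matrix (Fin m) (Fin l) ℝ) (H : Matrix (Fin n) (Fin l) ℝ)
    (hWH : W * Hᵀ = X)
    (hopt : nuclearNorm X = (1 / 2) * (frobNorm W ^ 2 + frobNorm H ^ 2)) :
    Wᵀ * U = Hᵀ * V := by
  classical
  -- spectral setup for G = Xᵀ X
  have hG : (Xᵀ * X).IsHermitian := by
    simpa [Matrix.conjTranspose_eq_transpose_of_trivial] using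
      Matrix.isHermitian_conjTranspose_mul_self X
  set μ : Fin n → ℝ := hG.eigenvalues with hμdef
  have hμ : ∀ j, 0 ≤ μ j := Matrix.eigenvalues_conjTranspose_mul_self_nonneg X
  set P : Matrix (Fin n) (Fin n) ℝ := (hG.eigenvectorUnitary : Matrix (Fin n) (Fin n) ℝ)
    with hPdef
  have hP1 : Pᵀ * P = 1 := by
    have h := Matrix.mem_unitaryGroup_iff'.mp hG.eigenvectorUnitary.2
    simpa [star_eq_conjTranspose, conjTranspose_eq_transpose_of_trivial] using h
  have hP2 : P * Pᵀ = 1 := by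
    have h := Matrix.mem_unitaryGroup_iff.mp hG.eigenvectorUnitary.2
    simpa [star_eq_conjTranspose, conjTranspose_eq_transpose_of_trivial] using h
  have hspec : Pᵀ * (Xᵀ * X) * P = Matrix.diagonal μ := by
    have h := hG.conjStarAlgAut_star_eigenvectorUnitary
    rw [Unitary.conjStarAlgAut_star_apply] at h
    simp only [RCLike.ofReal_real_eq_id, Function.id_comp] at h
    rw [← conjTranspose_eq_transpose_of_trivial X]
    simpa [star_eq_conjTranspose, conjTranspose_eq_transpose_of_trivial] using h
  set d : Fin n → ℝ := fun j => (Real.sqrt (μ j))⁻¹ with hddef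
  set Q : Matrix (Fin m) (Fin n) ℝ := X * P * Matrix.diagonal d with hQdef
  have hYY : (X * P)ᵀ * (X * P) = Matrix.diagonal μ := by
    rw [transpose_mul]
    calc Pᵀ * Xᵀ * (X * P) = Pᵀ * (Xᵀ * X) * P := by rw [Matrix.mul_assoc, Matrix.mul_assoc,
          Matrix.mul_assoc]
    _ = Matrix.diagonal μ := hspec
  have hQt : Qᵀ = Matrix.diagonal d * (X * P)ᵀ := by
    rw [hQdef, transpose_mul, diagonal_transpose]
  have hQtXP : Qᵀ * (X * P) = Matrix.diagonal (fun j => d j * μ j) := by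
    rw [hQt, Matrix.mul_assoc, hYY, diagonal_mul_diagonal]
  have hQQ : Qᵀ * Q = Matrix.diagonal (fun j => d j * μ j * d j) := by
    rw [hQdef, ← Matrix.mul_assoc, hQtXP, diagonal_mul_diagonal]
  have hdd : (fun j => d j * (d j * μ j * d j)) = d := by
    funext j
    rcases eq_or_lt_of_le (hμ j) with h0 | hpos
    · simp [hddef, ← h0]
    · have hs : Real.sqrt (μ j) * Real.sqrt (μ j) = μ j := Real.mul_self_sqrt (hμ j)
      have hsne : Real.sqrt (μ j) ≠ 0 := by positivity
      field_simp [hddef]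
      rw [hddef]
      field_simp
      nlinarith [hs]
  have hQproj : Q * (Qᵀ * Q) = Q := by
    rw [hQQ, hQdef, Matrix.mul_assoc, diagonal_mul_diagonal, hdd]
  have hnn : nuclearNorm X = ∑ j, Real.sqrt (μ j) := rfl
  have htrace : nuclearNorm X = Matrix.trace (Qᵀ * (X * P)) := by
    rw [hQtXP, trace_diagonal, hnn]
    apply Finset.sum_congr rfl
    intro j _
    rcases eq_or_lt_of_le (hμ j) with h0 | hpos
    · simp [hddef, ← h0]
    · have hs : Real.sqrt (μ j) * Real.sqrt (μ j) = μ j := Real.mul_self_sqrt (hμ j)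
      have hsne : Real.sqrt (μ j) ≠ 0 := by positivity
      rw [hddef]
      field_simp
      rw [sq]; exact hs
  -- the key upper bound : nuclearNorm X ≤ ∑ σ
  have hVcol : ∀ i, ∑ t, (V t i) ^ 2 = 1 := by
    intro i
    have := congrFun (congrFun hV i) i
    simpa [Matrix.mul_apply, Matrix.one_apply, pow_two] using this
  have hUcol : ∀ i, ∑ t, (U t i) ^ 2 = 1 := by
    intro i
    have := congrFun (congrFun hU i) i
    simpa [Matrix.mul_apply, Matrix.one_apply, pow_two] using this
  have hPproj : P * (Pᵀ * P) = P := by rw [hP1, Matrix.mul_one]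
  have key : nuclearNorm X ≤ ∑ i, σ i := by
    rw [htrace]
    have hform : Qᵀ * (X * P) = Qᵀ * U * Matrix.diagonal σ * (Vᵀ * P) := by
      rw [hSVD]
      simp only [Matrix.mul_assoc]
    rw [hform, Matrix.trace_mul_cycle (Qᵀ * U) (Matrix.diagonal σ) (Vᵀ * P),
      ← Matrix.mul_assoc, Matrix.trace_mul_comm, Matrix.mul_assoc (Vᵀ * P) Qᵀ U,
      trace_diagonal_mul']
    calc ∑ i, σ i * (Vᵀ * P * (Qᵀ * U)) i i
        ≤ ∑ i, σ i * 1 := by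
          apply Finset.sum_le_sum
          intro i _
          apply mul_le_mul_of_nonneg_left _ (hσ i).le
          -- (Vᵀ P Qᵀ U) i i ≤ 1
          have ha : ∑ j, ((Vᵀ * P) i j) ^ 2 ≤ 1 := by
            have hb := bessel_sum P hPproj (fun t => V t i)
            rw [hVcol i] at hb
            calc ∑ j, ((Vᵀ * P) i j) ^ 2 = ∑ j, (∑ t, P t j * V t i) ^ 2 := by
                  refine Finset.sum_congr rfl fun j _ => ?_
                  rw [Matrix.mul_apply]
                  refine congrArg (· ^ 2) ?_
                  exact Finset.sum_congr rfl fun t _ => by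
                    rw [Matrix.transpose_apply]; ring
              _ ≤ 1 := hb
          have hbb : ∑ j, ((Qᵀ * U) j i) ^ 2 ≤ 1 := by
            have hb := bessel_sum Q hQproj (fun t => U t i)
            rw [hUcol i] at hb
            calc ∑ j, ((Qᵀ * U) j i) ^ 2 = ∑ j, (∑ t, Q t j * U t i) ^ 2 := by
                  refine Finset.sum_congr rfl fun j _ => ?_
                  rw [Matrix.mul_apply]
                  refine congrArg (· ^ 2) ?_
                  exact Finset.sum_congr rfl fun t _ => by
                    rw [Matrix.transpose_apply]
              _ ≤ 1 := hb
          calc (Vᵀ * P * (Qᵀ * U)) i i = ∑ j, (Vᵀ * P) i j * (Qᵀ * U) j i := by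
                rw [Matrix.mul_apply]
            _ ≤ ∑ j, (((Vᵀ * P) i j) ^ 2 + ((Qᵀ * U) j i) ^ 2) / 2 := by
                apply Finset.sum_le_sum
                intro j _
                nlinarith [sq_nonneg ((Vᵀ * P) i j - (Qᵀ * U) j i)]
            _ = ((∑ j, ((Vᵀ * P) i j) ^ 2) + ∑ j, ((Qᵀ * U) j i) ^ 2) / 2 := by
                rw [← Finset.sum_add_distrib, ← Finset.sum_div]
            _ ≤ (1 + 1) / 2 := by linarith
            _ = 1 := by norm_num
      _ = ∑ i, σ i := by simp
  -- the inner product identity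
  set A : Matrix (Fin l) (Fin k) ℝ := Wᵀ * U with hAdef
  set B : Matrix (Fin l) (Fin k) ℝ := Hᵀ * V with hBdef
  have hABmat : (Uᵀ * W) * (Hᵀ * V) = Matrix.diagonal σ := by
    calc (Uᵀ * W) * (Hᵀ * V) = Uᵀ * (W * Hᵀ) * V := by
          simp only [Matrix.mul_assoc]
      _ = Uᵀ * (U * Matrix.diagonal σ * Vᵀ) * V := by rw [hWH, hSVD]
      _ = (Uᵀ * U) * Matrix.diagonal σ * (Vᵀ * V) := by simp only [Matrix.mul_assoc]
      _ = Matrix.diagonal σ := by rw [hU, hV, Matrix.one_mul, Matrix.mul_one]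
  have hS : ∑ p, ∑ q, A p q * B p q = ∑ i, σ i := by
    have h1 : Matrix.trace ((Uᵀ * W) * (Hᵀ * V)) = ∑ i, σ i := by
      rw [hABmat, trace_diagonal]
    rw [← h1, trace_eq_sum_mul, Finset.sum_comm]
    apply Finset.sum_congr rfl
    intro p _
    apply Finset.sum_congr rfl
    intro q _
    congr 1
    simp [hAdef, Matrix.mul_apply, mul_comm]
  -- Frobenius bounds
  have hUproj : U * (Uᵀ * U) = U := by rw [hU, Matrix.mul_one]
  have hVproj : V * (Vᵀ * V) = V := by rw [hV, Matrix.mul_one]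
  have hA2 : ∑ p, ∑ q, (A p q) ^ 2 ≤ ∑ i, ∑ j, (W i j) ^ 2 := by
    rw [Finset.sum_comm (γ := Fin m)]
    apply Finset.sum_le_sum
    intro p _
    have hb := bessel_sum U hUproj (fun t => W t p)
    calc ∑ q, (A p q) ^ 2 = ∑ q, (∑ t, U t q * W t p) ^ 2 := by
          apply Finset.sum_congr rfl
          intro q _
          congr 1
          simp [hAdef, Matrix.mul_apply, mul_comm]
      _ ≤ ∑ t, (W t p) ^ 2 := hb
  have hB2 : ∑ p, ∑ q, (B p q) ^ 2 ≤ ∑ i, ∑ j, (H i j) ^ 2 := by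
    rw [Finset.sum_comm (γ := Fin n)]
    apply Finset.sum_le_sum
    intro p _
    have hb := bessel_sum V hVproj (fun t => H t p)
    calc ∑ q, (B p q) ^ 2 = ∑ q, (∑ t, V t q * H t p) ^ 2 := by
          apply Finset.sum_congr rfl
          intro q _
          congr 1
          simp [hBdef, Matrix.mul_apply, mul_comm]
      _ ≤ ∑ t, (H t p) ^ 2 := hb
  -- conclude
  have hinner : ∀ p, ∑ q, (A p q - B p q) ^ 2
      = ((∑ q, (A p q) ^ 2) + (∑ q, (B p q) ^ 2)) - 2 * (∑ q, A p q * B p q) := by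
    intro p
    rw [← Finset.sum_add_distrib, Finset.mul_sum, ← Finset.sum_sub_distrib]
    apply Finset.sum_congr rfl
    intro q _
    ring
  have hsum : ∑ p, ∑ q, (A p q - B p q) ^ 2
      = (∑ p, ∑ q, (A p q) ^ 2) + (∑ p, ∑ q, (B p q) ^ 2)
        - 2 * (∑ p, ∑ q, A p q * B p q) := by
    calc ∑ p, ∑ q, (A p q - B p q) ^ 2
        = ∑ p, (((∑ q, (A p q) ^ 2) + (∑ q, (B p q) ^ 2)) - 2 * (∑ q, A p q * B p q)) :=
          Finset.sum_congr rfl fun p _ => hinner p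
      _ = _ := by
          rw [Finset.sum_sub_distrib, Finset.sum_add_distrib, Finset.mul_sum]
  have hWsq := frob_sq W
  have hHsq := frob_sq H
  have hle : ∑ p, ∑ q, (A p q - B p q) ^ 2 ≤ 0 := by
    rw [hsum, hS]
    have : (∑ i, ∑ j, (W i j) ^ 2) + (∑ i, ∑ j, (H i j) ^ 2) = 2 * nuclearNorm X := by
      rw [hopt, ← hWsq, ← hHsq]; ring
    linarith [hA2, hB2, key]
  have hzero : ∀ p ∈ Finset.univ, ∀ q ∈ Finset.univ, (A p q - B p q) ^ 2 = 0 := by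
    have h1 : ∑ p, ∑ q, (A p q - B p q) ^ 2 = 0 := by
      apply le_antisymm hle
      apply Finset.sum_nonneg
      intro p _
      apply Finset.sum_nonneg
      intro q _
      positivity
    intro p hp
    have h2 := (Finset.sum_eq_zero_iff_of_nonneg (fun p _ => Finset.sum_nonneg
      (fun q _ => sq_nonneg (A p q - B p q)))).mp h1 p hp
    intro q hq
    exact (Finset.sum_eq_zero_iff_of_nonneg (fun q _ => sq_nonneg (A p q - B p q))).mp h2 q hq
  ext p q
  have := hzero p (Finset.mem_univ p) q (Finset.mem_univ q)
  have := pow_eq_zero_iff (n := 2) (by norm_num) |>.mp this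
  linarith [sub_eq_zero.mp this]
end

section
/- Under the same hypotheses as above, Σ_{t=0}^k ε_t a_t ≤ (C² + C sqrt(C² + 4ΓD)) / (2Γ). -/
/-- Under the same hypotheses, `Σ ε_t a_t ≤ (C² + C sqrt(C² + 4ΓD)) / (2Γ)`. -/
theorem sum_eps_a_bound (Γ C D : ℝ) (hΓ : 0 < Γ) (hC : 0 ≤ C) (hD : 0 ≤ D)
    (k : ℕ) (a ε : ℕ → ℝ)
    (ha : ∀ t ≤ k, 0 ≤ a t) (hε : ∀ t ≤ k, 0 ≤ ε t)
    (hmain : Γ * ∑ t ∈ Finset.range (k + 1), (a t) ^ 2 ≤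
      D + ∑ t ∈ Finset.range (k + 1), ε t * a t)
    (hC2 : ∑ t ∈ Finset.range (k + 1), (ε t) ^ 2 ≤ C ^ 2) :
    ∑ t ∈ Finset.range (k + 1), ε t * a t ≤
      (C ^ 2 + C * Real.sqrt (C ^ 2 + 4 * Γ * D)) / (2 * Γ) := by
  set S := ∑ t ∈ Finset.range (k + 1), (a t) ^ 2 with hS
  set E := ∑ t ∈ Finset.range (k + 1), ε t * a t with hE
  have hSnn : 0 ≤ S := Finset.sum_nonneg fun t _ => sq_nonneg _
  have hEnn : 0 ≤ E := Finset.sum_nonneg fun t ht => by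
    have ht' := Finset.mem_range.mp ht
    exact mul_nonneg (hε t (Nat.lt_succ_iff.mp ht')) (ha t (Nat.lt_succ_iff.mp ht'))
  have hCS : E ^ 2 ≤ C ^ 2 * S :=
    le_trans (Finset.sum_mul_sq_le_sq_mul_sq (Finset.range (k + 1)) ε a)
      (mul_le_mul_of_nonneg_right hC2 hSnn)
  set R := Real.sqrt (C ^ 2 + 4 * Γ * D) with hR
  have hRnn : 0 ≤ R := Real.sqrt_nonneg _
  have hR2 : R ^ 2 = C ^ 2 + 4 * Γ * D := Real.sq_sqrt (by positivity)
  have key : Γ * E ^ 2 ≤ C ^ 2 * (D + E) := by nlinarith [mul_le_mul_of_nonneg_left hmain (sq_nonneg C), mul_le_mul_of_nonneg_left hCS hΓ.le]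
  have sq : (2 * Γ * E - C ^ 2) ^ 2 ≤ (C * R) ^ 2 := by
    nlinarith [mul_le_mul_of_nonneg_left key hΓ.le, hR2]
  rw [le_div_iff₀ (by positivity)]
  nlinarith [sq, mul_nonneg hC hRnn]
end

section
/- Let f have L-Lipschitz gradient, 0 < α ≤ α_max, δ ∈ (0,1), and suppose g ∈ ∇f(X̃) + α^{-1}(X_+ − X̃) + λ∂‖X_+‖_* with ‖g‖ ≤ ε, and f(X_+) ≤ f(X̃) + ⟨∇f(X̃), X_+ − X̃⟩ + (δ/α)‖X_+ − X̃‖². Then F(X_+) ≤ F(X̃) + ε‖X_+ − X̃‖ − ((1−δ)/α_max)‖X_+ − X̃‖², where F = f + λ‖·‖_*. -/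
open Matrix

def frobInner {m n : ℕ} (A B : Matrix (Fin m) (Fin n) ℝ) : ℝ :=
  ∑ i, ∑ j, A i j * B i j

/-- Convex subdifferential of `φ` at `X` with respect to the Frobenius inner product. -/
def subderivAt {m n : ℕ} (φ : Matrix (Fin m) (Fin n) ℝ → ℝ) (X : Matrix (Fin m) (Fin n) ℝ) :
    Set (Matrix (Fin m) (Fin n) ℝ) :=
  {G | ∀ Y, φ X + frobInner G (Y - X) ≤ φ Y}

lemma frobInner_self {m n : ℕ} (A : Matrix (Fin m) (Fin n) ℝ) :
    frobInner A A = frobNorm A ^ 2 := by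
  rw [frobNorm, Real.sq_sqrt (by positivity)]
  simp [frobInner, sq]

lemma frobInner_le {m n : ℕ} (A B : Matrix (Fin m) (Fin n) ℝ) :
    frobInner A B ≤ frobNorm A * frobNorm B := by
  have h := Real.sum_mul_le_sqrt_mul_sqrt (Finset.univ : Finset (Fin m × Fin n))
    (fun p => A p.1 p.2) (fun p => B p.1 p.2)
  simpa [frobInner, frobNorm, Fintype.sum_prod_type] using h

lemma frobNorm_nonneg {m n : ℕ} (A : Matrix (Fin m) (Fin n) ℝ) : 0 ≤ frobNorm A :=
  Real.sqrt_nonneg _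

lemma frobInner_add_left {m n : ℕ} (A B C : Matrix (Fin m) (Fin n) ℝ) :
    frobInner (A + B) C = frobInner A C + frobInner B C := by
  simp [frobInner, add_mul, Finset.sum_add_distrib]

lemma frobInner_smul_left {m n : ℕ} (c : ℝ) (A B : Matrix (Fin m) (Fin n) ℝ) :
    frobInner (c • A) B = c * frobInner A B := by
  simp [frobInner, Finset.mul_sum, mul_assoc]

lemma frobInner_neg_right {m n : ℕ} (A B : Matrix (Fin m) (Fin n) ℝ) :
    frobInner A (-B) = - frobInner A B := by
  simp [frobInner]

/-- Sufficient decrease of an inexact proximal gradient step with backtracking. -/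
theorem inexact_prox_grad_decrease {m n : ℕ}
    (f : Matrix (Fin m) (Fin n) ℝ → ℝ) (gf : Matrix (Fin m) (Fin n) ℝ → Matrix (Fin m) (Fin n) ℝ)
    (L lam α αmax δ ε : ℝ)
    (hL : 0 ≤ L) (hlam : 0 < lam) (hα : 0 < α) (hαmax : α ≤ αmax) (hδ0 : 0 < δ) (hδ1 : δ < 1)
    (hε : 0 ≤ ε)
    -- f is convex with gradient gf:
    (hconv : ∀ X Y, f X + frobInner (gf X) (Y - X) ≤ f Y)
    -- gf is L-Lipschitz (Frobenius norm):
    (hLip : ∀ X Y, frobNorm (gf X - gf Y) ≤ L * frobNorm (X - Y))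
    (Xt Xp : Matrix (Fin m) (Fin n) ℝ) (g : Matrix (Fin m) (Fin n) ℝ)
    -- g ∈ ∇f(X̃) + α⁻¹(X₊ − X̃) + λ ∂‖X₊‖_* with ‖g‖ ≤ ε:
    (hg : ∃ s ∈ subderivAt nuclearNorm Xp, g = gf Xt + α⁻¹ • (Xp - Xt) + lam • s)
    (hgsmall : frobNorm g ≤ ε)
    -- backtracking condition:
    (hback : f Xp ≤ f Xt + frobInner (gf Xt) (Xp - Xt) + (δ / α) * frobNorm (Xp - Xt) ^ 2) :
    f Xp + lam * nuclearNorm Xp ≤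
      f Xt + lam * nuclearNorm Xt + ε * frobNorm (Xp - Xt) -
        ((1 - δ) / αmax) * frobNorm (Xp - Xt) ^ 2 := by
  obtain ⟨s, hs, hgdef⟩ := hg
  set d := Xp - Xt with hd
  set t := frobNorm d with ht
  have ht0 : 0 ≤ t := frobNorm_nonneg d
  -- subgradient inequality at Xt
  have hsub := hs Xt
  have hXtXp : Xt - Xp = -d := by simp [hd]
  rw [hXtXp, frobInner_neg_right] at hsub
  -- frobInner g d expansion
  have hexp : frobInner g d = frobInner (gf Xt) d + α⁻¹ * t ^ 2 + lam * frobInner s d := by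
    rw [hgdef, frobInner_add_left, frobInner_add_left, frobInner_smul_left,
      frobInner_smul_left, frobInner_self]
  have hCS : frobInner g d ≤ ε * t := by
    calc frobInner g d ≤ frobNorm g * t := frobInner_le g d
      _ ≤ ε * t := by nlinarith
  have hnuc : lam * nuclearNorm Xp ≤ lam * nuclearNorm Xt + lam * frobInner s d := by
    nlinarith [hsub]
  have ht2 : 0 ≤ t ^ 2 := sq_nonneg t
  have hdiv : (1 - δ) / αmax ≤ (1 - δ) / α :=
    div_le_div_of_nonneg_left (by linarith) hα hαmax
  have hmul : ((1 - δ) / αmax) * t ^ 2 ≤ ((1 - δ) / α) * t ^ 2 :=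
    mul_le_mul_of_nonneg_right hdiv ht2
  have hc : (δ / α) * t ^ 2 - α⁻¹ * t ^ 2 = -((1 - δ) / α) * t ^ 2 := by
    field_simp; ring
  linarith [hback, hnuc, hexp, hCS, hmul, hc]
end
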